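/- If k_N/N → q with 0 < q < p_β < 1, then -(1/N) log Z_{k_N}(β) → -log Z(β) + D(q‖p_β) as N → ∞, where Z_k(β) = Σ_{m=0}^{k} C(N,m) e^{-mβω}, Z(β) = 1 + e^{-βω}, p_β = e^{-βω}/(1+e^{-βω}). -/

import Mathlib

open Filter Topology

/-- Truncated partition function of `N` qubits of gap `ω` at inverse temperature `β`:
`Z_k(β) = Σ_{m=0}^k C(N,m) e^{-mβω}`. -/
noncomputable def Ztrunc (N k : ℕ) (β ω : ℝ) : ℝ :=
  ∑ m ∈ Finset.range (k + 1), (N.choose m : ℝ) * Real.exp (-(m : ℝ) * β * ω)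

/-- Binary relative entropy (natural log). -/
noncomputable def relent (q p : ℝ) : ℝ :=
  q * Real.log (q / p) + (1 - q) * Real.log ((1 - q) / (1 - p))

/-- If `k_N/N → q` with `0 < q < p_β < 1`, then
`-(1/N) log Z_{k_N}(β) → -log Z(β) + D(q‖p_β)` as `N → ∞`, where `Z(β) = 1 + e^{-βω}`
and `p_β = e^{-βω}/(1 + e^{-βω})`. -/
lemma step_up {α : Type*} [Preorder α] {f : ℕ → α} :
    ∀ {k : ℕ}, (∀ m, m < k → f m ≤ f (m+1)) → ∀ m, m ≤ k → f m ≤ f k := by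
  intro k
  induction k with
  | zero => intro _ m hm; simp [Nat.le_zero.mp hm]
  | succ k ih =>
    intro h m hm
    rcases eq_or_lt_of_le hm with h1 | h1
    · exact le_of_eq (by rw [h1])
    · exact (ih (fun m hm => h m (hm.trans (Nat.lt_succ_self k))) m
        (Nat.lt_succ_iff.mp h1)).trans (h k (Nat.lt_succ_self k))

lemma step_down {α : Type*} [Preorder α] {f : ℕ → α} {k : ℕ}
    (h : ∀ m, k ≤ m → f (m+1) ≤ f m) : ∀ m, k ≤ m → f m ≤ f k := by
  intro m hm
  induction m, hm using Nat.le_induction with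
  | base => exact le_refl _
  | succ m hm ih => exact (h m hm).trans ih

lemma t_le_t_k (N k : ℕ) (hk : k ≤ N) (m : ℕ) :
    N.choose m * k^m * (N-k)^(N-m) ≤ N.choose k * k^k * (N-k)^(N-k) := by
  have hup : ∀ m, m < k → N.choose m * k^m * (N-k)^(N-m)
      ≤ N.choose (m+1) * k^(m+1) * (N-k)^(N-(m+1)) := by
    intro m hm
    have hmN : m < N := hm.trans_le hk
    have hNm : N - m = (N - (m+1)) + 1 := by omega
    have hc : N.choose (m+1) * (m+1) = N.choose m * (N - m) := Nat.choose_succ_right_eq N m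
    refine Nat.le_of_mul_le_mul_left ?_ (Nat.succ_pos m)
    calc (m+1) * (N.choose m * k^m * (N-k)^(N-m))
        = (N.choose m * k^m * (N-k)^(N-(m+1))) * ((m+1) * (N-k)) := by
          rw [hNm, pow_succ]; ring
      _ ≤ (N.choose m * k^m * (N-k)^(N-(m+1))) * (k * (N-m)) := by
          exact Nat.mul_le_mul_left _ (Nat.mul_le_mul (by omega) (by omega))
      _ = (N.choose m * (N-m)) * k^(m+1) * (N-k)^(N-(m+1)) := by
          rw [pow_succ]; ring
      _ = (N.choose (m+1) * (m+1)) * k^(m+1) * (N-k)^(N-(m+1)) := by rw [hc]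
      _ = (m+1) * (N.choose (m+1) * k^(m+1) * (N-k)^(N-(m+1))) := by ring
  have hdown : ∀ m, k ≤ m → N.choose (m+1) * k^(m+1) * (N-k)^(N-(m+1))
      ≤ N.choose m * k^m * (N-k)^(N-m) := by
    intro m hm
    rcases lt_or_ge m N with hmN | hmN
    · have hNm : N - m = (N - (m+1)) + 1 := by omega
      have hc : N.choose (m+1) * (m+1) = N.choose m * (N - m) := Nat.choose_succ_right_eq N m
      refine Nat.le_of_mul_le_mul_left ?_ (Nat.succ_pos m)
      calc (m+1) * (N.choose (m+1) * k^(m+1) * (N-k)^(N-(m+1)))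
          = (N.choose (m+1) * (m+1)) * k^(m+1) * (N-k)^(N-(m+1)) := by ring
        _ = (N.choose m * (N-m)) * k^(m+1) * (N-k)^(N-(m+1)) := by rw [hc]
        _ = (N.choose m * k^m * (N-k)^(N-(m+1))) * (k * (N-m)) := by
            rw [pow_succ]; ring
        _ ≤ (N.choose m * k^m * (N-k)^(N-(m+1))) * ((m+1) * (N-k)) := by
            exact Nat.mul_le_mul_left _ (Nat.mul_le_mul (by omega) (by omega))
        _ = (m+1) * (N.choose m * k^m * (N-k)^(N-m)) := by
            rw [hNm, pow_succ]; ring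
    · have : N.choose (m+1) = 0 := Nat.choose_eq_zero_of_lt (by omega)
      simp [this]
  rcases Nat.le_total m k with h | h
  · exact step_up (f := fun m => N.choose m * k^m * (N-k)^(N-m)) hup m h
  · exact step_down (f := fun m => N.choose m * k^m * (N-k)^(N-m)) hdown m h

lemma choose_bounds (N k : ℕ) (hk : k ≤ N) :
    N.choose k * k^k * (N-k)^(N-k) ≤ N^N ∧
    N^N ≤ (N+1) * (N.choose k * k^k * (N-k)^(N-k)) := by
  have hsum : ∑ m ∈ Finset.range (N+1), N.choose m * k^m * (N-k)^(N-m) = N^N := by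
    have h := add_pow k (N-k) N
    rw [Nat.add_sub_cancel' hk] at h
    rw [h]
    exact Finset.sum_congr rfl fun m _ => by push_cast; ring
  constructor
  · rw [← hsum]
    exact Finset.single_le_sum (f := fun m => N.choose m * k^m * (N-k)^(N-m))
      (fun m _ => Nat.zero_le _) (Finset.mem_range.mpr (by omega))
  · rw [← hsum]
    calc ∑ m ∈ Finset.range (N+1), N.choose m * k^m * (N-k)^(N-m)
        ≤ (Finset.range (N+1)).card • (N.choose k * k^k * (N-k)^(N-k)) :=
          Finset.sum_le_card_nsmul _ _ _ (fun m _ => t_le_t_k N k hk m)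
      _ = (N+1) * (N.choose k * k^k * (N-k)^(N-k)) := by
          simp [Finset.card_range, smul_eq_mul]

lemma key_bounds (N k : ℕ) (x : ℝ) (hx : 0 < x) (hk1 : 1 ≤ k) (hkN : k < N)
    (hmono : (k:ℝ) ≤ x * ((N:ℝ) - k)) :
    |Real.log (∑ m ∈ Finset.range (k+1), (N.choose m : ℝ) * x^m)
      - ((N:ℝ) * Real.log N - (k:ℝ) * Real.log k
        - ((N:ℝ)-k) * Real.log ((N:ℝ)-k) + (k:ℝ) * Real.log x)|
      ≤ 2 * Real.log (N+1) := by
  have hkNr : (k:ℝ) ≤ N := Nat.cast_le.mpr hkN.le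
  have hN0 : (0:ℝ) < N := by exact_mod_cast Nat.pos_of_ne_zero (by omega)
  have hch0 : (0:ℝ) < (N.choose k : ℝ) := by exact_mod_cast Nat.choose_pos hkN.le
  have hNk0 : (0:ℝ) < (N:ℝ) - k := by
    have : (k:ℝ) < N := Nat.cast_lt.mpr hkN
    linarith
  set u : ℕ → ℝ := fun m => (N.choose m : ℝ) * x^m with hu
  set S : ℝ := ∑ m ∈ Finset.range (k+1), u m with hS
  have huk_pos : 0 < u k := by
    apply mul_pos
    · exact_mod_cast Nat.choose_pos hkN.le
    · positivity
  have hunn : ∀ m, 0 ≤ u m := fun m => by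
    apply mul_nonneg (Nat.cast_nonneg _) (le_of_lt (by positivity))
  have hS_lb : u k ≤ S :=
    Finset.single_le_sum (fun m _ => hunn m) (Finset.mem_range.mpr (by omega))
  have hstep : ∀ m, m < k → u m ≤ u (m+1) := by
    intro m hm
    have hmN : m < N := hm.trans hkN
    have hc : (N.choose (m+1) : ℝ) * (m+1) = (N.choose m : ℝ) * ((N:ℝ) - m) := by
      have := Nat.choose_succ_right_eq N m
      have h2 : ((N.choose (m+1) * (m+1) : ℕ) : ℝ) = ((N.choose m * (N - m) : ℕ) : ℝ) := by
        exact_mod_cast congrArg (Nat.cast : ℕ → ℝ) this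
      push_cast [Nat.cast_sub hmN.le] at h2
      linarith
    have hx1 : ((m:ℝ)+1) ≤ x * ((N:ℝ) - m) := by
      have h1 : ((m:ℝ)+1) ≤ k := by exact_mod_cast Nat.succ_le_of_lt hm
      have h2 : x * ((N:ℝ) - k) ≤ x * ((N:ℝ) - m) := by
        apply mul_le_mul_of_nonneg_left _ hx.le
        have : (m:ℝ) ≤ k := by exact_mod_cast hm.le
        linarith
      linarith
    have hpos : (0:ℝ) < (m:ℝ) + 1 := by positivity
    refine le_of_mul_le_mul_left ?_ hpos
    have e1 : ((m:ℝ)+1) * u (m+1) = u m * (x * ((N:ℝ) - m)) := by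
      simp only [hu]
      rw [pow_succ]
      calc ((m:ℝ)+1) * ((N.choose (m+1) : ℝ) * (x^m * x))
          = ((N.choose (m+1) : ℝ) * ((m:ℝ)+1)) * (x^m * x) := by ring
        _ = ((N.choose m : ℝ) * ((N:ℝ) - m)) * (x^m * x) := by rw [hc]
        _ = (N.choose m : ℝ) * x^m * (x * ((N:ℝ) - m)) := by ring
    rw [e1]
    calc ((m:ℝ)+1) * u m = u m * ((m:ℝ)+1) := by ring
      _ ≤ u m * (x * ((N:ℝ) - m)) := mul_le_mul_of_nonneg_left hx1 (hunn m)
  have hS_ub : S ≤ ((k:ℝ)+1) * u k := by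
    have := Finset.sum_le_card_nsmul (Finset.range (k+1)) u (u k)
      (fun m hm => step_up hstep m (Nat.lt_succ_iff.mp (Finset.mem_range.mp hm)))
    simpa [Finset.card_range, nsmul_eq_mul] using this
  have hS_pos : 0 < S := lt_of_lt_of_le huk_pos hS_lb
  -- log bounds for S
  have hlog1 : Real.log (u k) ≤ Real.log S := Real.log_le_log huk_pos hS_lb
  have hlog2 : Real.log S ≤ Real.log ((k:ℝ)+1) + Real.log (u k) := by
    calc Real.log S ≤ Real.log (((k:ℝ)+1) * u k) := Real.log_le_log hS_pos hS_ub
      _ = Real.log ((k:ℝ)+1) + Real.log (u k) := Real.log_mul (by positivity) huk_pos.ne'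
  have hluk : Real.log (u k) = Real.log (N.choose k : ℝ) + (k:ℝ) * Real.log x := by
    rw [hu]
    simp only
    rw [Real.log_mul (by exact_mod_cast (Nat.choose_pos hkN.le).ne') (by positivity),
      Real.log_pow]
  -- choose bounds
  obtain ⟨hb1, hb2⟩ := choose_bounds N k hkN.le
  have hcast : ((N.choose k * k^k * (N-k)^(N-k) : ℕ) : ℝ)
      = (N.choose k : ℝ) * (k:ℝ)^k * ((N:ℝ)-k)^(N-k) := by
    push_cast [Nat.cast_sub hkN.le]
    ring
  have hB_pos : (0:ℝ) < (N.choose k : ℝ) * (k:ℝ)^k * ((N:ℝ)-k)^(N-k) := by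
    apply mul_pos (mul_pos (by exact_mod_cast Nat.choose_pos hkN.le) (by positivity))
    positivity
  have hb1' : (N.choose k : ℝ) * (k:ℝ)^k * ((N:ℝ)-k)^(N-k) ≤ ((N:ℝ))^N := by
    rw [← hcast]
    exact_mod_cast hb1
  have hb2' : ((N:ℝ))^N ≤ ((N:ℝ)+1) * ((N.choose k : ℝ) * (k:ℝ)^k * ((N:ℝ)-k)^(N-k)) := by
    calc ((N:ℝ))^N = ((N^N : ℕ) : ℝ) := by push_cast; ring
      _ ≤ (((N+1) * (N.choose k * k^k * (N-k)^(N-k)) : ℕ) : ℝ) := by exact_mod_cast hb2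
      _ = ((N:ℝ)+1) * ((N.choose k : ℝ) * (k:ℝ)^k * ((N:ℝ)-k)^(N-k)) := by
          rw [Nat.cast_mul, hcast]; push_cast; ring
  have hlogB : Real.log ((N.choose k : ℝ) * (k:ℝ)^k * ((N:ℝ)-k)^(N-k))
      = Real.log (N.choose k : ℝ) + (k:ℝ) * Real.log k
        + ((N:ℝ)-k) * Real.log ((N:ℝ)-k) := by
    rw [Real.log_mul (mul_pos hch0 (by positivity)).ne' (by positivity),
      Real.log_mul hch0.ne' (by positivity),
      Real.log_pow, Real.log_pow]
    have : ((N - k : ℕ) : ℝ) = (N:ℝ) - k := Nat.cast_sub hkN.le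
    rw [this]
  have hlogA : Real.log (((N:ℝ))^N) = (N:ℝ) * Real.log N := Real.log_pow N N
  have hf1 : Real.log (N.choose k : ℝ) + (k:ℝ) * Real.log k
      + ((N:ℝ)-k) * Real.log ((N:ℝ)-k) ≤ (N:ℝ) * Real.log N := by
    rw [← hlogB, ← hlogA]
    exact Real.log_le_log hB_pos hb1'
  have hf2 : (N:ℝ) * Real.log N ≤ Real.log ((N:ℝ)+1)
      + (Real.log (N.choose k : ℝ) + (k:ℝ) * Real.log k
        + ((N:ℝ)-k) * Real.log ((N:ℝ)-k)) := by
    rw [← hlogB, ← hlogA, ← Real.log_mul (by positivity) hB_pos.ne']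
    exact Real.log_le_log (pow_pos hN0 N) hb2'
  have hf5 : Real.log ((k:ℝ)+1) ≤ Real.log ((N:ℝ)+1) :=
    Real.log_le_log (by positivity) (by linarith)
  have hf6 : 0 ≤ Real.log ((N:ℝ)+1) := Real.log_nonneg (by
    have : (0:ℝ) ≤ N := Nat.cast_nonneg N
    linarith)
  rw [abs_le]
  constructor <;> linarith

theorem Ztrunc_log_asymptotics (β ω q : ℝ) (hβ : 0 < β) (hω : 0 < ω)
    (k : ℕ → ℕ) (hkN : ∀ N, k N ≤ N)
    (hq : 0 < q) (hqp : q < Real.exp (-β * ω) / (1 + Real.exp (-β * ω)))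
    (hlim : Tendsto (fun N : ℕ => (k N : ℝ) / N) atTop (nhds q)) :
    Tendsto (fun N : ℕ => -(1 / (N : ℝ)) * Real.log (Ztrunc N (k N) β ω)) atTop
      (nhds (-Real.log (1 + Real.exp (-β * ω)) +
        relent q (Real.exp (-β * ω) / (1 + Real.exp (-β * ω))))) := by
  set x : ℝ := Real.exp (-β * ω) with hxdef
  have hx : 0 < x := Real.exp_pos _
  have h1x : (0:ℝ) < 1 + x := by linarith
  set p : ℝ := x / (1 + x) with hpdef
  have hp0 : 0 < p := div_pos hx h1x
  have hp1 : p < 1 := by rw [hpdef, div_lt_one h1x]; linarith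
  have hq1 : q < 1 := hqp.trans hp1
  set q' : ℝ := (q + p) / 2 with hq'def
  have hqq' : q < q' := by rw [hq'def]; linarith [hqp]
  have hq'p : q' < p := by rw [hq'def]; linarith [hqp]
  have hq'0 : 0 < q' := hq.trans hqq'
  have hq'1 : q' < 1 := hq'p.trans hp1
  have hq'x : q' < x * (1 - q') := by
    have h := (lt_div_iff₀ h1x).mp (by rw [← hpdef]; exact hq'p : q' < x / (1 + x))
    nlinarith
  -- rewriting Ztrunc with powers of x
  have hZ : ∀ N, Ztrunc N (k N) β ω
      = ∑ m ∈ Finset.range (k N + 1), (N.choose m : ℝ) * x^m := by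
    intro N
    unfold Ztrunc
    refine Finset.sum_congr rfl fun m _ => ?_
    rw [show -(m:ℝ) * β * ω = (m:ℝ) * (-β * ω) by ring, Real.exp_nat_mul]
  set g : ℝ → ℝ := fun a => a * Real.log a + (1-a) * Real.log (1-a) - a * Real.log x
    with hgdef
  -- the limit value equals g q
  have hLval : -Real.log (1 + x) + relent q p = g q := by
    unfold relent
    rw [Real.log_div hq.ne' hp0.ne',
      Real.log_div (by linarith : (1:ℝ) - q ≠ 0) (by linarith : (1:ℝ) - p ≠ 0),
      hpdef, Real.log_div hx.ne' h1x.ne',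
      show 1 - x / (1 + x) = 1 / (1 + x) by field_simp; ring,
      Real.log_div one_ne_zero h1x.ne', Real.log_one, hgdef]
    ring
  -- Tendsto of g along k N / N
  have ha1 : Tendsto (fun N : ℕ => Real.log ((k N : ℝ) / N)) atTop (nhds (Real.log q)) :=
    (Real.continuousAt_log hq.ne').tendsto.comp hlim
  have ha2 : Tendsto (fun N : ℕ => 1 - (k N : ℝ) / N) atTop (nhds (1 - q)) :=
    tendsto_const_nhds.sub hlim
  have ha3 : Tendsto (fun N : ℕ => Real.log (1 - (k N : ℝ) / N)) atTop
      (nhds (Real.log (1 - q))) :=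
    (Real.continuousAt_log (by linarith : (1:ℝ) - q ≠ 0)).tendsto.comp ha2
  have hg : Tendsto (fun N : ℕ => g ((k N : ℝ) / N)) atTop (nhds (g q)) := by
    rw [hgdef]
    exact ((hlim.mul ha1).add (ha2.mul ha3)).sub (hlim.mul_const (Real.log x))
  -- error bound sequence tendsto 0
  have herrb : Tendsto (fun N : ℕ => 2 * Real.log ((N:ℝ)+1) / N) atTop (nhds 0) := by
    have l1 : Tendsto (fun y : ℝ => Real.log y / y) atTop (nhds 0) := by
      have := Real.tendsto_pow_log_div_mul_add_atTop 1 0 1 one_ne_zero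
      simpa using this
    have l2 : Tendsto (fun N : ℕ => (N:ℝ) + 1) atTop atTop :=
      tendsto_atTop_add_const_right _ 1 tendsto_natCast_atTop_atTop
    have l3 : Tendsto (fun N : ℕ => Real.log ((N:ℝ)+1) / ((N:ℝ)+1)) atTop (nhds 0) :=
      l1.comp l2
    have l4 : Tendsto (fun N : ℕ => ((N:ℝ)+1) / N) atTop (nhds 1) := by
      have h5 : Tendsto (fun N : ℕ => 1 + 1 / (N:ℝ)) atTop (nhds (1 + 0)) :=
        tendsto_const_nhds.add tendsto_one_div_atTop_nhds_zero_nat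
      rw [add_zero] at h5
      refine h5.congr' ?_
      filter_upwards [eventually_ge_atTop 1] with N hN
      have : (N:ℝ) ≠ 0 := by positivity
      field_simp
    have l5 := l3.mul l4
    rw [zero_mul] at l5
    have l6 : Tendsto (fun N : ℕ => Real.log ((N:ℝ)+1) / N) atTop (nhds 0) := by
      refine l5.congr fun N => ?_
      rcases eq_or_ne ((N:ℝ)) 0 with h | h
      · simp [h]
      · field_simp
    have := l6.const_mul (2:ℝ)
    rw [mul_zero] at this
    refine this.congr fun N => by ring
  -- eventual bound
  have heb : ∀ᶠ N : ℕ in atTop,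
      ‖(-(1 / (N : ℝ)) * Real.log (Ztrunc N (k N) β ω)) - g ((k N : ℝ) / N)‖
        ≤ 2 * Real.log ((N:ℝ)+1) / N := by
    filter_upwards [hlim.eventually_lt_const hqq', hlim.eventually_const_lt
      (half_lt_self hq), eventually_ge_atTop 1] with N h1 h2 h3
    have hN0 : (0:ℝ) < N := by exact_mod_cast h3
    have hkpos : 1 ≤ k N := by
      rcases Nat.eq_zero_or_pos (k N) with h | h
      · rw [h] at h2; norm_num at h2; linarith
      · exact h
    have hkr : (k N : ℝ) < q' * N := (div_lt_iff₀ hN0).mp h1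
    have hkltN : k N < N := by
      have : (k N : ℝ) < N := by nlinarith
      exact_mod_cast this
    have hmono : (k N : ℝ) ≤ x * ((N:ℝ) - k N) := by nlinarith
    have key := key_bounds N (k N) x hx hkpos hkltN hmono
    have hk0 : (0:ℝ) < (k N : ℝ) := by exact_mod_cast hkpos
    have hNk : (0:ℝ) < (N:ℝ) - k N := by
      have : (k N : ℝ) < N := by exact_mod_cast hkltN
      linarith
    have hgT : g ((k N : ℝ) / N)
        = -(1/(N:ℝ)) * ((N:ℝ) * Real.log N - (k N : ℝ) * Real.log (k N)
          - ((N:ℝ) - k N) * Real.log ((N:ℝ) - k N) + (k N : ℝ) * Real.log x) := by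
      rw [hgdef]
      simp only
      rw [Real.log_div hk0.ne' hN0.ne',
        show 1 - (k N : ℝ)/N = ((N:ℝ) - k N)/N by field_simp,
        Real.log_div hNk.ne' hN0.ne']
      field_simp
      ring
    rw [hZ N, hgT]
    set S : ℝ := ∑ m ∈ Finset.range (k N + 1), (N.choose m : ℝ) * x^m with hSdef
    set T : ℝ := (N:ℝ) * Real.log N - (k N : ℝ) * Real.log (k N)
      - ((N:ℝ) - k N) * Real.log ((N:ℝ) - k N) + (k N : ℝ) * Real.log x with hTdef
    calc ‖-(1/(N:ℝ)) * Real.log S - -(1/(N:ℝ)) * T‖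
        = |(-(1/(N:ℝ)))| * |Real.log S - T| := by
          rw [Real.norm_eq_abs, show -(1/(N:ℝ)) * Real.log S - -(1/(N:ℝ)) * T
            = -(1/(N:ℝ)) * (Real.log S - T) by ring, abs_mul]
      _ = (1/(N:ℝ)) * |Real.log S - T| := by
          rw [abs_neg, abs_of_pos (by positivity)]
      _ ≤ (1/(N:ℝ)) * (2 * Real.log ((N:ℝ)+1)) := by
          exact mul_le_mul_of_nonneg_left key (by positivity)
      _ = 2 * Real.log ((N:ℝ)+1) / N := by ring
  have herr : Tendsto (fun N : ℕ =>
      (-(1 / (N : ℝ)) * Real.log (Ztrunc N (k N) β ω)) - g ((k N : ℝ) / N)) atTop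
      (nhds 0) := squeeze_zero_norm' heb herrb
  have hfin := hg.add herr
  rw [add_zero] at hfin
  rw [hLval]
  exact hfin.congr fun N => by ring
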